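/- Let x* ∈ ℝ^E with x* ≥ 0 satisfy all rank inequalities x*(F) ≤ r(F) for nonempty F ⊆ E, and suppose c_p < x*(E) < c_{p+1} for some p ∈ {1, …, m−1}. Then for every F ⊆ E: if (c_{p+1} − r(F))·x*(F) − (r(F) − c_p)·x*(E∖F) > c_p·(c_{p+1} − r(F)), then c_p < r(F) < c_{p+1}. -/
import Mathlib


open Finset

/-- A (loopless) matroid on a finite ground set, given by its independent sets. -/
structure FinMatroid (α : Type*) [Fintype α] [DecidableEq α] where
  Indep : Finset α → Prop
  empty_indep : Indep ∅
  subset_indep : ∀ ⦃I J : Finset α⦄, Indep J → I ⊆ J → Indep I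
  exchange : ∀ ⦃I J : Finset α⦄, Indep I → Indep J → I.card < J.card →
    ∃ e ∈ J \ I, Indep (insert e I)
  loopless : ∀ e : α, Indep {e}

variable {α : Type*} [Fintype α] [DecidableEq α]

open Classical in
/-- The rank of a set: the maximum cardinality of an independent subset. -/
noncomputable def FinMatroid.r (M : FinMatroid α) (F : Finset α) : ℕ :=
  (F.powerset.filter M.Indep).sup Finset.card

/-- incidence vector -/
noncomputable def incVec (I : Finset α) : α → ℝ := fun e => if e ∈ I then 1 else 0

/-- x(S) = ∑_{e ∈ S} x_e -/
noncomputable def fsum (x : α → ℝ) (S : Finset α) : ℝ := ∑ e ∈ S, x e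

/-- closed set -/
def FinMatroid.ClosedSet (M : FinMatroid α) (F : Finset α) : Prop :=
  ∀ e ∉ F, M.r F < M.r (insert e F)

/-- F is separable -/
def FinMatroid.Separable (M : FinMatroid α) (F : Finset α) : Prop :=
  ∃ F₁ F₂ : Finset α, F₁ ≠ ∅ ∧ F₂ ≠ ∅ ∧ Disjoint F₁ F₂ ∧ F₁ ∪ F₂ = F ∧
    M.r F₁ + M.r F₂ ≤ M.r F

def FinMatroid.Inseparable (M : FinMatroid α) (F : Finset α) : Prop :=
  ¬ M.Separable F

/-- the k-rank r^k(F) = k - r(E \ F), as an integer -/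
noncomputable def FinMatroid.krank (M : FinMatroid α) (k : ℕ) (F : Finset α) : ℤ :=
  (k : ℤ) - (M.r Fᶜ : ℤ)

/-- F is k-separable -/
noncomputable def FinMatroid.kSeparable (M : FinMatroid α) (k : ℕ) (F : Finset α) : Prop :=
  ∃ F₁ F₂ : Finset α, F₁ ≠ ∅ ∧ F₂ ≠ ∅ ∧ Disjoint F₁ F₂ ∧ F₁ ∪ F₂ = F ∧
    M.krank k F₁ + M.krank k F₂ = M.krank k F

noncomputable def FinMatroid.kInseparable (M : FinMatroid α) (k : ℕ) (F : Finset α) : Prop :=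
  ¬ M.kSeparable k F

/-- convex hull of incidence vectors of independent sets of cardinality exactly k -/
noncomputable def exactPolytope (M : FinMatroid α) (k : ℕ) : Set (α → ℝ) :=
  convexHull ℝ {x | ∃ I : Finset α, M.Indep I ∧ I.card = k ∧ x = incVec I}

/-- the cardinality constrained matroid polytope P^c(E) -/
noncomputable def cardPolytope (M : FinMatroid α) {m : ℕ} (c : Fin m → ℕ) : Set (α → ℝ) :=
  convexHull ℝ {x | ∃ I : Finset α, M.Indep I ∧ (∃ p : Fin m, I.card = c p) ∧ x = incVec I}

/-- dimension of (the affine hull of) a subset of ℝ^E -/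
noncomputable def polyDim (s : Set (α → ℝ)) : ℕ :=
  Module.finrank ℝ (affineSpan ℝ s).direction

/-- `a · x ≤ a₀` defines a facet of `P` -/
noncomputable def IsFacet (P : Set (α → ℝ)) (a : α → ℝ) (a₀ : ℝ) : Prop :=
  (∀ x ∈ P, ∑ e, a e * x e ≤ a₀) ∧
  polyDim {x ∈ P | ∑ e, a e * x e = a₀} + 1 = polyDim P


/-- under c_p < x*(E) < c_(p+1), a violated forbidden set
inequality forces c_p < r(F) < c_(p+1). -/
theorem violation_forces_rank_window {α : Type*} [Fintype α] [DecidableEq α]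
    (M : FinMatroid α)
    {m : ℕ} (c : Fin m → ℕ) (hm : 2 ≤ m) (hmono : StrictMono c)
    (hlast : c ⟨m - 1, by omega⟩ ≤ M.r Finset.univ)
    (x : α → ℝ) (hnn : ∀ e : α, 0 ≤ x e)
    (hrank : ∀ F : Finset α, F ≠ ∅ → fsum x F ≤ (M.r F : ℝ))
    (p : Fin m) (hp : p.val + 1 < m)
    (hlo : (c p : ℝ) < fsum x Finset.univ)
    (hhi : fsum x Finset.univ < (c ⟨p.val + 1, hp⟩ : ℝ)) :
    ∀ F : Finset α, (c p : ℝ) * ((c ⟨p.val + 1, hp⟩ : ℝ) - M.r F) < ((c ⟨p.val + 1, hp⟩ : ℝ) - M.r F) * fsum x F - ((M.r F : ℝ) - c p) * fsum x Fᶜ →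
      c p < M.r F ∧ M.r F < c ⟨p.val + 1, hp⟩ := by
  intro F hviol
  set cp : ℝ := (c p : ℝ)
  set cq : ℝ := (c ⟨p.val + 1, hp⟩ : ℝ)
  set rF : ℝ := (M.r F : ℝ)
  have hcc : c p < c ⟨p.val + 1, hp⟩ := hmono (by simp [Fin.lt_def])
  have hcpq : cp < cq := by simp only [cp, cq]; exact_mod_cast hcc
  have hs : fsum x F ≤ rF := by
    rcases eq_or_ne F ∅ with h | h
    · subst h
      simp only [fsum, Finset.sum_empty]
      positivity
    · exact hrank F h
  have ht : 0 ≤ fsum x Fᶜ := Finset.sum_nonneg fun e _ => hnn e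
  have hsum : fsum x F + fsum x Fᶜ = fsum x Finset.univ := by
    simpa [fsum] using Finset.sum_add_sum_compl F x
  set s := fsum x F
  set t := fsum x Fᶜ
  constructor
  · by_contra h
    push_neg at h
    have hr : rF ≤ cp := by simp only [rF, cp]; exact_mod_cast h
    have key : (cp - rF) * (cq - (s + t)) ≥ 0 :=
      mul_nonneg (by linarith) (by linarith [hsum, hhi])
    nlinarith [key, hviol, hs]
  · by_contra h
    push_neg at h
    have hr : cq ≤ rF := by simp only [rF, cq]; exact_mod_cast h
    have key : (rF - cq) * ((s + t) - cp) ≥ 0 :=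
      mul_nonneg (by linarith) (by linarith [hsum, hlo])
    nlinarith [key, hviol, ht]
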